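/- For $S > 1/2$ and $\beta < 1/2$, the trilinear operator $R_3(u,v,w)_k = \sum_{k_1+k_2+k_3=k} \frac{e^{i3(k_1+k_2)(k_2+k_3)(k_3+k_1)t}}{k_1} u_{k_1}v_{k_2}w_{k_3}$ satisfies $\|R_3(u,v,w)\|_{\dot H^{-S}} \leq c_6'(S,\beta)\|u\|_{\dot H^{-\beta}}\|v\|_{\dot H^0}\|w\|_{\dot H^0}$ for a finite constant $c_6'(S,\beta)$. -/

import Mathlib

open Complex

noncomputable def hnorm (s : ℝ) (u : ℤ → ℂ) : ℝ :=
  (∑' k : ℤ, |(k : ℝ)| ^ (2 * s) * ‖u k‖ ^ 2) ^ ((1 : ℝ) / 2)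

noncomputable def R3 (t : ℝ) (u v w : ℤ → ℂ) (k : ℤ) : ℂ :=
  ∑' p : ℤ × ℤ,
    Complex.exp (Complex.I *
        (3 * ((p.1 : ℂ) + (p.2 : ℂ)) * ((p.2 : ℂ) + ((k : ℂ) - (p.1 : ℂ) - (p.2 : ℂ))) *
          (((k : ℂ) - (p.1 : ℂ) - (p.2 : ℂ)) + (p.1 : ℂ)) * (t : ℂ)))
      / (p.1 : ℂ) * u p.1 * v p.2 * w (k - p.1 - p.2)

open Real in
/-- Cauchy–Schwarz for tsums over `ℤ`. -/
lemma cs_tsum {f g : ℤ → ℝ} (hf : ∀ k, 0 ≤ f k) (hg : ∀ k, 0 ≤ g k)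
    (hf2 : Summable fun k => f k ^ 2) (hg2 : Summable fun k => g k ^ 2) :
    Summable (fun k => f k * g k) ∧
      ∑' k, f k * g k ≤ √(∑' k, f k ^ 2) * √(∑' k, g k ^ 2) := by
  have hsum : Summable (fun k => f k * g k) := by
    refine Summable.of_nonneg_of_le (fun k => mul_nonneg (hf k) (hg k))
      (fun k => ?_) ((hf2.add hg2).div_const 2)
    nlinarith [sq_nonneg (f k - g k)]
  refine ⟨hsum, Summable.tsum_le_of_sum_le hsum fun s => ?_⟩
  calc ∑ k ∈ s, f k * g k ≤ √(∑ k ∈ s, f k ^ 2) * √(∑ k ∈ s, g k ^ 2) :=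
        Real.sum_mul_le_sqrt_mul_sqrt s f g
    _ ≤ √(∑' k, f k ^ 2) * √(∑' k, g k ^ 2) := by
        gcongr
        · exact Summable.sum_le_tsum s (fun k _ => sq_nonneg _) hf2
        · exact Summable.sum_le_tsum s (fun k _ => sq_nonneg _) hg2

theorem R3_neg_bound (S β : ℝ) (hS : 1 / 2 < S) (hβ : β < 1 / 2) :
    ∃ C : ℝ, ∀ (t : ℝ) (u v w : ℤ → ℂ), u 0 = 0 → v 0 = 0 → w 0 = 0 →
      (Summable fun k : ℤ => |(k : ℝ)| ^ (2 * (-β)) * ‖u k‖ ^ 2) →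
      (Summable fun k : ℤ => ‖v k‖ ^ 2) →
      (Summable fun k : ℤ => ‖w k‖ ^ 2) →
      hnorm (-S) (R3 t u v w) ≤ C * hnorm (-β) u * hnorm 0 v * hnorm 0 w := by
  have hAsum : Summable (fun k : ℤ => |(k : ℝ)| ^ (2 * (β - 1))) := by
    have := Real.summable_abs_int_rpow (b := 2 - 2 * β) (by linarith)
    convert this using 2 with k
    ring_nf
  have hBsum : Summable (fun k : ℤ => |(k : ℝ)| ^ (2 * (-S))) := by
    have := Real.summable_abs_int_rpow (b := 2 * S) (by linarith)
    convert this using 2 with k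
    ring_nf
  set A : ℝ := ∑' k : ℤ, |(k : ℝ)| ^ (2 * (β - 1)) with hA
  set B : ℝ := ∑' k : ℤ, |(k : ℝ)| ^ (2 * (-S)) with hB
  refine ⟨Real.sqrt B * Real.sqrt A, ?_⟩
  intro t u v w hu0 hv0 hw0 hu hv hw
  set Hu := hnorm (-β) u with hHu
  set Nv := hnorm 0 v with hNv
  set Nw := hnorm 0 w with hNw
  have hHu' : Hu = Real.sqrt (∑' k : ℤ, |(k : ℝ)| ^ (2 * (-β)) * ‖u k‖ ^ 2) := by
    rw [hHu, hnorm, Real.sqrt_eq_rpow]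
  have hNv' : Nv = Real.sqrt (∑' k : ℤ, ‖v k‖ ^ 2) := by
    rw [hNv, hnorm, Real.sqrt_eq_rpow]
    congr 1
    refine tsum_congr fun k => ?_
    norm_num
  have hNw' : Nw = Real.sqrt (∑' k : ℤ, ‖w k‖ ^ 2) := by
    rw [hNw, hnorm, Real.sqrt_eq_rpow]
    congr 1
    refine tsum_congr fun k => ?_
    norm_num
  have hHu0 : 0 ≤ Hu := by rw [hHu']; exact Real.sqrt_nonneg _
  have hNv0 : 0 ≤ Nv := by rw [hNv']; exact Real.sqrt_nonneg _
  have hNw0 : 0 ≤ Nw := by rw [hNw']; exact Real.sqrt_nonneg _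
  -- the weight sequence a
  set a : ℤ → ℝ := fun k => ‖u k‖ / |(k : ℝ)| with ha
  have ha0 : ∀ k, 0 ≤ a k := fun k => div_nonneg (norm_nonneg _) (abs_nonneg _)
  -- Cauchy-Schwarz for the u-sum
  have hacs := cs_tsum (f := fun k : ℤ => |(k : ℝ)| ^ (β - 1))
      (g := fun k : ℤ => |(k : ℝ)| ^ (-β) * ‖u k‖)
      (fun k => Real.rpow_nonneg (abs_nonneg _) _)
      (fun k => mul_nonneg (Real.rpow_nonneg (abs_nonneg _) _) (norm_nonneg _))
      (by
        refine hAsum.congr fun k => ?_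
        rw [← Real.rpow_natCast (|(k:ℝ)| ^ (β - 1)) 2, ← Real.rpow_mul (abs_nonneg _)]
        norm_num [mul_comm])
      (by
        refine hu.congr fun k => ?_
        rw [mul_pow, ← Real.rpow_natCast (|(k:ℝ)| ^ (-β)) 2, ← Real.rpow_mul (abs_nonneg _)]
        norm_num [mul_comm])
  have hfg_eq : ∀ k : ℤ, |(k : ℝ)| ^ (β - 1) * (|(k : ℝ)| ^ (-β) * ‖u k‖) = a k := by
    intro k
    rcases eq_or_ne k 0 with rfl | hk
    · simp [ha, hu0]
    · have hkpos : (0 : ℝ) < |(k : ℝ)| := by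
        simp only [abs_pos, ne_eq, Int.cast_eq_zero]; exact hk
      rw [ha, ← mul_assoc, ← Real.rpow_add hkpos]
      have : β - 1 + -β = -1 := by ring
      rw [this, Real.rpow_neg_one]
      field_simp
  have hasum : Summable a := hacs.1.congr hfg_eq
  have hatsum : ∑' k, a k ≤ Real.sqrt A * Hu := by
    have h1 : ∑' k : ℤ, a k = ∑' k : ℤ, |(k : ℝ)| ^ (β - 1) * (|(k : ℝ)| ^ (-β) * ‖u k‖) :=
      (tsum_congr hfg_eq).symm
    rw [h1]
    refine hacs.2.trans (le_of_eq ?_)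
    congr 1
    · congr 1
      refine tsum_congr fun k => ?_
      rw [← Real.rpow_natCast (|(k:ℝ)| ^ (β - 1)) 2, ← Real.rpow_mul (abs_nonneg _)]
      norm_num [mul_comm]
    · rw [hHu']
      congr 1
      refine tsum_congr fun k => ?_
      rw [mul_pow, ← Real.rpow_natCast (|(k:ℝ)| ^ (-β)) 2, ← Real.rpow_mul (abs_nonneg _)]
      norm_num [mul_comm]
  -- pointwise bound on R3
  set M : ℝ := Real.sqrt A * Hu * (Nv * Nw) with hM
  have hM0 : 0 ≤ M := by positivity
  have hR3bound : ∀ k : ℤ, ‖R3 t u v w k‖ ≤ M := by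
    intro k
    -- Cauchy-Schwarz in k2 for each k1
    have hwshift : ∀ k1 : ℤ, Summable fun k2 : ℤ => ‖w (k - k1 - k2)‖ ^ 2 := by
      intro k1
      exact ((Equiv.subLeft (k - k1)).summable_iff (f := fun j : ℤ => ‖w j‖ ^ 2)).mpr hw
    have hvwcs : ∀ k1 : ℤ, Summable (fun k2 : ℤ => ‖v k2‖ * ‖w (k - k1 - k2)‖) ∧
        ∑' k2 : ℤ, ‖v k2‖ * ‖w (k - k1 - k2)‖ ≤ Nv * Nw := by
      intro k1
      obtain ⟨hs, hle⟩ := cs_tsum (f := fun k2 : ℤ => ‖v k2‖)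
        (g := fun k2 : ℤ => ‖w (k - k1 - k2)‖) (fun _ => norm_nonneg _)
        (fun _ => norm_nonneg _) hv (hwshift k1)
      refine ⟨hs, hle.trans (le_of_eq ?_)⟩
      rw [hNv', hNw']
      exact congrArg (fun x => Real.sqrt (∑' j : ℤ, ‖v j‖ ^ 2) * Real.sqrt x)
        ((Equiv.subLeft (k - k1)).tsum_eq (fun j : ℤ => ‖w j‖ ^ 2))
    set T : ℤ × ℤ → ℝ := fun p => a p.1 * (‖v p.2‖ * ‖w (k - p.1 - p.2)‖) with hT
    have hT0 : ∀ p, 0 ≤ T p := fun p =>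
      mul_nonneg (ha0 _) (mul_nonneg (norm_nonneg _) (norm_nonneg _))
    have hTsum : Summable T := by
      rw [summable_prod_of_nonneg hT0]
      constructor
      · intro k1
        exact ((hvwcs k1).1).mul_left (a k1)
      · refine Summable.of_nonneg_of_le (fun k1 => tsum_nonneg fun k2 => hT0 (k1, k2))
          (fun k1 => ?_) (hasum.mul_right (Nv * Nw))
        have hfun : (fun k2 => T (k1, k2))
            = fun k2 => a k1 * (‖v k2‖ * ‖w (k - k1 - k2)‖) := rfl
        rw [hfun, tsum_mul_left]
        exact mul_le_mul_of_nonneg_left (hvwcs k1).2 (ha0 k1)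
    have hTtsum : ∑' p, T p ≤ M := by
      rw [Summable.tsum_prod' hTsum (fun k1 => ((hvwcs k1).1).mul_left (a k1))]
      have step : ∑' k1 : ℤ, ∑' k2 : ℤ, T (k1, k2) ≤ ∑' k1 : ℤ, a k1 * (Nv * Nw) := by
        refine Summable.tsum_le_tsum (fun k1 => ?_) (summable_prod_of_nonneg hT0 |>.mp hTsum |>.2)
          (hasum.mul_right _)
        have hfun : (fun k2 => T (k1, k2))
            = fun k2 => a k1 * (‖v k2‖ * ‖w (k - k1 - k2)‖) := rfl
        rw [hfun, tsum_mul_left]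
        exact mul_le_mul_of_nonneg_left (hvwcs k1).2 (ha0 k1)
      refine step.trans ?_
      rw [tsum_mul_right, hM]
      exact mul_le_mul_of_nonneg_right hatsum (by positivity)
    -- norm of each term equals T
    have hterm : ∀ p : ℤ × ℤ,
        ‖Complex.exp (Complex.I *
            (3 * ((p.1 : ℂ) + (p.2 : ℂ)) * ((p.2 : ℂ) + ((k : ℂ) - (p.1 : ℂ) - (p.2 : ℂ))) *
              (((k : ℂ) - (p.1 : ℂ) - (p.2 : ℂ)) + (p.1 : ℂ)) * (t : ℂ)))
          / (p.1 : ℂ) * u p.1 * v p.2 * w (k - p.1 - p.2)‖ = T p := by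
      intro p
      have hexp : ‖Complex.exp (Complex.I *
          (3 * ((p.1 : ℂ) + (p.2 : ℂ)) * ((p.2 : ℂ) + ((k : ℂ) - (p.1 : ℂ) - (p.2 : ℂ))) *
            (((k : ℂ) - (p.1 : ℂ) - (p.2 : ℂ)) + (p.1 : ℂ)) * (t : ℂ)))‖ = 1 := by
        have hc : (3 * ((p.1 : ℂ) + (p.2 : ℂ)) * ((p.2 : ℂ) + ((k : ℂ) - (p.1 : ℂ) - (p.2 : ℂ))) *
            (((k : ℂ) - (p.1 : ℂ) - (p.2 : ℂ)) + (p.1 : ℂ)) * (t : ℂ))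
            = (((3 * ((p.1 : ℝ) + (p.2 : ℝ)) * ((p.2 : ℝ) + ((k : ℝ) - (p.1 : ℝ) - (p.2 : ℝ))) *
              (((k : ℝ) - (p.1 : ℝ) - (p.2 : ℝ)) + (p.1 : ℝ)) * t) : ℝ) : ℂ) := by
          push_cast; ring
        rw [hc, mul_comm]
        exact Complex.norm_exp_ofReal_mul_I _
      rw [norm_mul, norm_mul, norm_mul, norm_div, hexp]
      have : ‖((p.1 : ℤ) : ℂ)‖ = |(p.1 : ℝ)| := by
        rw [Complex.norm_intCast]
      rw [this, hT]
      simp only [ha]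
      ring
    have hnormsum : Summable (fun p : ℤ × ℤ =>
        ‖Complex.exp (Complex.I *
            (3 * ((p.1 : ℂ) + (p.2 : ℂ)) * ((p.2 : ℂ) + ((k : ℂ) - (p.1 : ℂ) - (p.2 : ℂ))) *
              (((k : ℂ) - (p.1 : ℂ) - (p.2 : ℂ)) + (p.1 : ℂ)) * (t : ℂ)))
          / (p.1 : ℂ) * u p.1 * v p.2 * w (k - p.1 - p.2)‖) := hTsum.congr fun p => (hterm p).symm
    calc ‖R3 t u v w k‖ ≤ ∑' p : ℤ × ℤ, ‖Complex.exp (Complex.I *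
            (3 * ((p.1 : ℂ) + (p.2 : ℂ)) * ((p.2 : ℂ) + ((k : ℂ) - (p.1 : ℂ) - (p.2 : ℂ))) *
              (((k : ℂ) - (p.1 : ℂ) - (p.2 : ℂ)) + (p.1 : ℂ)) * (t : ℂ)))
          / (p.1 : ℂ) * u p.1 * v p.2 * w (k - p.1 - p.2)‖ :=
        norm_tsum_le_tsum_norm hnormsum
      _ = ∑' p, T p := tsum_congr hterm
      _ ≤ M := hTtsum
  -- final summation in k
  have hterm2 : ∀ k : ℤ, |(k : ℝ)| ^ (2 * (-S)) * ‖R3 t u v w k‖ ^ 2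
      ≤ |(k : ℝ)| ^ (2 * (-S)) * M ^ 2 := by
    intro k
    refine mul_le_mul_of_nonneg_left ?_ (Real.rpow_nonneg (abs_nonneg _) _)
    exact pow_le_pow_left₀ (norm_nonneg _) (hR3bound k) 2
  have hsum2 : Summable (fun k : ℤ => |(k : ℝ)| ^ (2 * (-S)) * M ^ 2) := hBsum.mul_right _
  have hsum1 : Summable (fun k : ℤ => |(k : ℝ)| ^ (2 * (-S)) * ‖R3 t u v w k‖ ^ 2) :=
    Summable.of_nonneg_of_le
      (fun k => mul_nonneg (Real.rpow_nonneg (abs_nonneg _) _) (sq_nonneg _)) hterm2 hsum2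
  have hfinal : ∑' k : ℤ, |(k : ℝ)| ^ (2 * (-S)) * ‖R3 t u v w k‖ ^ 2 ≤ B * M ^ 2 := by
    calc ∑' k : ℤ, |(k : ℝ)| ^ (2 * (-S)) * ‖R3 t u v w k‖ ^ 2
        ≤ ∑' k : ℤ, |(k : ℝ)| ^ (2 * (-S)) * M ^ 2 := Summable.tsum_le_tsum hterm2 hsum1 hsum2
      _ = B * M ^ 2 := by rw [tsum_mul_right]
  have : hnorm (-S) (R3 t u v w) ≤ Real.sqrt (B * M ^ 2) := by
    rw [hnorm, ← Real.sqrt_eq_rpow]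
    exact Real.sqrt_le_sqrt hfinal
  refine this.trans (le_of_eq ?_)
  rw [Real.sqrt_mul (tsum_nonneg fun k => Real.rpow_nonneg (abs_nonneg _) _),
    Real.sqrt_sq hM0, hM]
  ring
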